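/- Let (G, φ) be a gain graph over the group ℝ² ⋊ SO(2), and define the matrix M(G,φ) ∈ ℂ^{A(G) × V(G)} by: for a non-loop arc e, the entry at (e, source(e)) is 1 and at (e, target(e)) is −t(π₂(φ(e))); for a loop e at v, the entry at (e, v) is 1 − t(π₂(φ(e))); all other entries are 0, where t : SO(2) → ℂ sends a rotation by angle θ to e^{iθ} and π₂ is the projection to SO(2). Then for a balanced cycle S of (G, π₂∘φ) traversed as a closed walk W = e₁,...,e_k, the linear form g_W(z) = Σᵢ aᵢ z_{eᵢ}, with aᵢ = t(π₂(φ(e₁)⋯φ(e_{i−1}))) if eᵢ is traversed forwards and aᵢ = −t(π₂(φ(eᵢ)⁻¹φ(e₁)⋯φ(e_{i−1}))) otherwise, vanishes identically on the column span of M(G,φ). -/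

import Mathlib

section GainGraph

variable {V A : Type*}

/-- The starting vertex of a step `(e, d)`. -/
def stepStart (src tgt : A → V) (s : A × Bool) : V := if s.2 then src s.1 else tgt s.1

/-- The ending vertex of a step. -/
def stepEnd (src tgt : A → V) (s : A × Bool) : V := if s.2 then tgt s.1 else src s.1

/-- `IsWalk src tgt u v w`: `w` is a walk from `u` to `v`. -/
def IsWalk (src tgt : A → V) : V → V → List (A × Bool) → Prop
  | u, v, [] => u = v
  | u, v, s :: w => stepStart src tgt s = u ∧ IsWalk src tgt (stepEnd src tgt s) v w

/-- The rotation (`SO(2)`-) gain of a walk, recorded as a unit complex number via the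
isomorphism `t : SO(2) ≃ 𝕋`; here `ρ e = t(π₂(φ e))`. -/
noncomputable def rotGain (ρ : A → ℂ) (w : List (A × Bool)) : ℂ :=
  (w.map fun s => if s.2 then ρ s.1 else (ρ s.1)⁻¹).prod

/-- The row of the matrix `M(G, φ)` indexed by the arc `e`: for a non-loop arc the
entry at `src e` is `1` and at `tgt e` is `-t(π₂(φ e))`; for a loop at `v` the entry
at `v` is `1 - t(π₂(φ e))`; all other entries vanish. -/
noncomputable def Mrow [DecidableEq V] (src tgt : A → V) (ρ : A → ℂ) (e : A) (v : V) : ℂ :=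
  if src e = tgt e then (if v = src e then 1 - ρ e else 0)
  else if v = src e then 1 else if v = tgt e then - ρ e else 0

/-- The value of the linear form `g_W` at `z`, accumulated with prefix rotation gain
`p = t(π₂(φ(e₁)⋯φ(e_{i-1})))`: a forward step contributes `p · z_e`, a backward step
contributes `-t(π₂(φ(e)⁻¹ φ(e₁)⋯φ(e_{i-1}))) · z_e = -(ρ e)⁻¹ p · z_e`. -/
noncomputable def walkForm (ρ : A → ℂ) (z : A → ℂ) : ℂ → List (A × Bool) → ℂ
  | _, [] => 0
  | p, (e, d) :: w =>
      (if d then p else -((ρ e)⁻¹ * p)) * z e +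
        walkForm ρ z (p * (if d then ρ e else (ρ e)⁻¹)) w

end GainGraph


lemma Mrow_sum {V A : Type*} [Fintype V] [DecidableEq V]
    (src tgt : A → V) (ρ : A → ℂ) (x : V → ℂ) (e : A) :
    (∑ u : V, Mrow src tgt ρ e u * x u) = x (src e) - ρ e * x (tgt e) := by
  unfold Mrow
  by_cases h : src e = tgt e
  · rw [← h]
    simp only [if_pos rfl]
    rw [Finset.sum_eq_single (src e)]
    · simp only [if_true]; ring
    · intro b _ hb; simp [hb]
    · simp
  · simp only [if_neg h]
    have : ∀ u : V, (if u = src e then (1:ℂ) else if u = tgt e then -ρ e else 0) * x u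
        = (if u = src e then x u else 0) + (if u = tgt e then -ρ e * x u else 0) := by
      intro u
      by_cases h1 : u = src e
      · subst h1; simp [h]
      · by_cases h2 : u = tgt e
        · subst h2; simp [h1]
        · simp [h1, h2]
    simp only [this, Finset.sum_add_distrib, Finset.sum_ite_eq' Finset.univ,
      Finset.mem_univ, if_pos]
    ring

lemma walkForm_eq {V A : Type*} [Fintype V] [DecidableEq V]
    (src tgt : A → V) (ρ : A → ℂ) (hρ : ∀ e, ‖ρ e‖ = 1) (x : V → ℂ) :
    ∀ (W : List (A × Bool)) (u w : V) (p : ℂ), IsWalk src tgt u w W →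
      walkForm ρ (fun e => ∑ u : V, Mrow src tgt ρ e u * x u) p W
        = p * x u - p * rotGain ρ W * x w := by
  intro W
  induction W with
  | nil => intro u w p h; cases h; simp [walkForm, rotGain]
  | cons s W ih =>
    obtain ⟨e, d⟩ := s
    intro u w p h
    obtain ⟨h1, h2⟩ := h
    have hne : ρ e ≠ 0 := by
      intro h0; have := hρ e; rw [h0] at this; simp at this
    have := ih _ w (p * (if d then ρ e else (ρ e)⁻¹)) h2
    rw [walkForm, this, Mrow_sum]
    have hg : rotGain ρ ((e, d) :: W) = (if d then ρ e else (ρ e)⁻¹) * rotGain ρ W := by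
      simp [rotGain]
    rw [hg]
    cases d <;> simp only [if_true, if_false, Bool.false_eq_true] <;>
      simp [stepStart, stepEnd] at h1 h2 ⊢ <;> subst h1
    · rw [(ih _ w _ h2 : _)] at this
      field_simp
      ring
    · ring

/-- for a gain graph over `ℝ² ⋊ SO(2)` with rotation gains `ρ e =
t(π₂(φ e))` (unit complex numbers), the linear form `g_W` associated to a balanced
closed walk `W` of `(G, π₂ ∘ φ)` (rotation gain `1`) vanishes identically on the
column span of `M(G, φ)`, i.e. on all vectors `z = M(G, φ) x`. -/
theorem balanced_cycle_form_vanishes {V A : Type*} [Fintype V] [DecidableEq V]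
    (src tgt : A → V) (ρ : A → ℂ) (hρ : ∀ e, ‖ρ e‖ = 1)
    (v : V) (W : List (A × Bool))
    (hW : IsWalk src tgt v v W) (hbal : rotGain ρ W = 1) :
    ∀ x : V → ℂ,
      walkForm ρ (fun e => ∑ u : V, Mrow src tgt ρ e u * x u) 1 W = 0 := by
  intro x
  rw [walkForm_eq src tgt ρ hρ x W v v 1 hW, hbal]
  ring
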